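/- For an integer m ≥ 1, let S be a complex matrix indexed by (Fin m × Fin m) (an operator on ℂ^m ⊗ ℂ^m), and for such a matrix set S₁₂ = S ⊗ₖ 1ₘ and S₂₃ = 1ₘ ⊗ₖ S (Kronecker product with the m×m identity, reindexed so that both act on ℂ^m ⊗ ℂ^m ⊗ ℂ^m). Say S satisfies condition (E) if S₂₃·S₁₂·(S₁₂+S₂₃) = (S₁₂+S₂₃)·S₂₃·S₁₂. If S satisfies (E), then: (a) if S is invertible, S⁻¹ satisfies (E); (b) (P·S·P)ᵀ satisfies (E), where P is the permutation (swap) matrix P((i,j),(k,l)) = δ_{il}δ_{jk} and ᵀ is matrix transpose; (c) for any invertible m×m matrix Q, the matrix (Q ⊗ₖ Q)·S·(Q ⊗ₖ Q)⁻¹ satisfies (E). -/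

import Mathlib

open Matrix Kronecker

/-- `S ⊗ₖ 1ₘ`, reindexed to act on `ℂ^m ⊗ ℂ^m ⊗ ℂ^m`. -/
noncomputable def kron12 {m : ℕ} (S : Matrix (Fin m × Fin m) (Fin m × Fin m) ℂ) :
    Matrix (Fin m × Fin m × Fin m) (Fin m × Fin m × Fin m) ℂ :=
  Matrix.reindex (Equiv.prodAssoc (Fin m) (Fin m) (Fin m))
    (Equiv.prodAssoc (Fin m) (Fin m) (Fin m)) (S ⊗ₖ (1 : Matrix (Fin m) (Fin m) ℂ))

/-- `1ₘ ⊗ₖ S`, acting on `ℂ^m ⊗ ℂ^m ⊗ ℂ^m`. -/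
noncomputable def kron23 {m : ℕ} (S : Matrix (Fin m × Fin m) (Fin m × Fin m) ℂ) :
    Matrix (Fin m × Fin m × Fin m) (Fin m × Fin m × Fin m) ℂ :=
  (1 : Matrix (Fin m) (Fin m) ℂ) ⊗ₖ S

/-- Condition (E): the single relation of `S_3` characterising tensor-product
representations of the braid-like algebra `S_n`. -/
def condE {m : ℕ} (S : Matrix (Fin m × Fin m) (Fin m × Fin m) ℂ) : Prop :=
  kron23 S * kron12 S * (kron12 S + kron23 S) =
    (kron12 S + kron23 S) * kron23 S * kron12 S

/-- The swap matrix `P((i,j),(k,l)) = δ_{il} δ_{jk}` on `ℂ^m ⊗ ℂ^m`. -/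
def swapMatrix (m : ℕ) : Matrix (Fin m × Fin m) (Fin m × Fin m) ℂ :=
  Matrix.of fun p q => if p.1 = q.2 ∧ p.2 = q.1 then 1 else 0

section PairE

variable {n : Type*} [Fintype n] [DecidableEq n]

/-- The abstract form of condition (E) for a pair of matrices. -/
def pairE (A B : Matrix n n ℂ) : Prop :=
  B * A * (A + B) = (A + B) * B * A

lemma pairE_inv {A B : Matrix n n ℂ} (hA : IsUnit A.det) (hB : IsUnit B.det)
    (h : pairE A B) : pairE A⁻¹ B⁻¹ := by
  have cA : ∀ X : Matrix n n ℂ, A⁻¹ * (A * X) = X := fun X => by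
    rw [← mul_assoc, Matrix.nonsing_inv_mul _ hA, one_mul]
  have cA' : ∀ X : Matrix n n ℂ, A * (A⁻¹ * X) = X := fun X => by
    rw [← mul_assoc, Matrix.mul_nonsing_inv _ hA, one_mul]
  have cB : ∀ X : Matrix n n ℂ, B⁻¹ * (B * X) = X := fun X => by
    rw [← mul_assoc, Matrix.nonsing_inv_mul _ hB, one_mul]
  have cB' : ∀ X : Matrix n n ℂ, B * (B⁻¹ * X) = X := fun X => by
    rw [← mul_assoc, Matrix.mul_nonsing_inv _ hB, one_mul]
  have hAA : A * A⁻¹ = 1 := Matrix.mul_nonsing_inv _ hA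
  have hAA' : A⁻¹ * A = 1 := Matrix.nonsing_inv_mul _ hA
  have hBB : B * B⁻¹ = 1 := Matrix.mul_nonsing_inv _ hB
  have hBB' : B⁻¹ * B = 1 := Matrix.nonsing_inv_mul _ hB
  have h2 := congrArg
    (fun X : Matrix n n ℂ => B⁻¹ * A⁻¹ * B⁻¹ * X * (A⁻¹ * B⁻¹ * A⁻¹)) h
  simp only [pairE] at h2 ⊢
  simp only [mul_add, add_mul, mul_assoc, cA, cA', cB, cB', hAA, hAA', hBB, hBB',
    one_mul, mul_one] at h2 ⊢
  rw [add_comm]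
  rw [← h2]
  exact add_comm _ _

lemma pairE_conj {A B K : Matrix n n ℂ} (hK : IsUnit K.det) (h : pairE A B) :
    pairE (K * A * K⁻¹) (K * B * K⁻¹) := by
  have hc : ∀ X Y : Matrix n n ℂ,
      (K * X * K⁻¹) * (K * Y * K⁻¹) = K * (X * Y) * K⁻¹ := by
    intro X Y
    have c2 : ∀ Z : Matrix n n ℂ, K⁻¹ * (K * Z) = Z := fun Z => by
      rw [← mul_assoc, Matrix.nonsing_inv_mul _ hK, one_mul]
    simp only [mul_assoc, c2]
  have hsum : K * A * K⁻¹ + K * B * K⁻¹ = K * (A + B) * K⁻¹ := by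
    rw [Matrix.mul_add, Matrix.add_mul]
  unfold pairE
  rw [hsum, hc, hc, hc, hc, h]

lemma pairE_transpose {A B : Matrix n n ℂ} (h : pairE A B) : pairE Bᵀ Aᵀ := by
  have h' := congrArg Matrix.transpose h
  simp only [Matrix.transpose_mul, Matrix.transpose_add] at h'
  unfold pairE
  rw [add_comm Bᵀ Aᵀ]
  simp only [mul_assoc] at h' ⊢
  exact h'.symm

lemma pairE_reindex {o : Type*} [Fintype o] [DecidableEq o] (e : n ≃ o)
    {A B : Matrix n n ℂ} (h : pairE A B) :
    pairE (Matrix.reindex e e A) (Matrix.reindex e e B) := by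
  have h' := congrArg (Matrix.reindexAlgEquiv ℂ ℂ e) h
  simpa only [pairE, _root_.map_mul, _root_.map_add, Matrix.reindexAlgEquiv_apply] using h'

end PairE

section Swap

variable {m : ℕ}

lemma swapMatrix_mul (S : Matrix (Fin m × Fin m) (Fin m × Fin m) ℂ) :
    swapMatrix m * S = S.submatrix Prod.swap id := by
  ext p q
  rw [Matrix.mul_apply, Finset.sum_eq_single (p.2, p.1)]
  · simp [swapMatrix, Prod.swap]
  · intro b _ hb
    have : ¬(p.1 = b.2 ∧ p.2 = b.1) := by
      rintro ⟨h1, h2⟩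
      exact hb (Prod.ext h2.symm h1.symm)
    simp [swapMatrix, this]
  · intro hmem
    exact absurd (Finset.mem_univ _) hmem

lemma mul_swapMatrix (S : Matrix (Fin m × Fin m) (Fin m × Fin m) ℂ) :
    S * swapMatrix m = S.submatrix id Prod.swap := by
  ext p q
  rw [Matrix.mul_apply, Finset.sum_eq_single (q.2, q.1)]
  · simp [swapMatrix, Prod.swap]
  · intro b _ hb
    have : ¬(b.1 = q.2 ∧ b.2 = q.1) := by
      rintro ⟨h1, h2⟩
      exact hb (Prod.ext h1 h2)
    simp [swapMatrix, this]
  · intro hmem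
    exact absurd (Finset.mem_univ _) hmem

lemma swap_conj (S : Matrix (Fin m × Fin m) (Fin m × Fin m) ℂ) :
    swapMatrix m * S * swapMatrix m = S.submatrix Prod.swap Prod.swap := by
  rw [swapMatrix_mul, mul_swapMatrix, Matrix.submatrix_submatrix]
  rfl

/-- Reversal of the three tensor factors. -/
def revE (m : ℕ) : Fin m × Fin m × Fin m ≃ Fin m × Fin m × Fin m where
  toFun p := (p.2.2, p.2.1, p.1)
  invFun p := (p.2.2, p.2.1, p.1)
  left_inv := fun _ => rfl
  right_inv := fun _ => rfl

lemma kron12_swapT (S : Matrix (Fin m × Fin m) (Fin m × Fin m) ℂ) :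
    kron12 (swapMatrix m * S * swapMatrix m)ᵀ =
      Matrix.reindex (revE m) (revE m) (kron23 S)ᵀ := by
  rw [swap_conj]
  ext ⟨i, j, k⟩ ⟨p, q, r⟩
  simp only [kron12, kron23, Matrix.reindex_apply, Matrix.submatrix_apply,
    Equiv.prodAssoc, Equiv.coe_fn_symm_mk, Matrix.kroneckerMap_apply,
    Matrix.transpose_apply, Matrix.one_apply, revE, Equiv.coe_fn_mk]
  rcases eq_or_ne k r with hkr | hkr
  · simp [hkr]
  · simp [hkr, Ne.symm hkr]

lemma kron23_swapT (S : Matrix (Fin m × Fin m) (Fin m × Fin m) ℂ) :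
    kron23 (swapMatrix m * S * swapMatrix m)ᵀ =
      Matrix.reindex (revE m) (revE m) (kron12 S)ᵀ := by
  rw [swap_conj]
  ext ⟨i, j, k⟩ ⟨p, q, r⟩
  simp only [kron12, kron23, Matrix.reindex_apply, Matrix.submatrix_apply,
    Equiv.prodAssoc, Equiv.coe_fn_symm_mk, Matrix.kroneckerMap_apply,
    Matrix.transpose_apply, Matrix.one_apply, revE, Equiv.coe_fn_mk]
  rcases eq_or_ne i p with hip | hip
  · simp [hip]
  · simp [hip, Ne.symm hip]

end Swap

/-- Symmetries of condition (E): inverse, `(PSP)ᵀ`, and conjugation by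
`Q ⊗ Q`. -/
theorem condE_symmetries {m : ℕ} (hm : 1 ≤ m)
    (S : Matrix (Fin m × Fin m) (Fin m × Fin m) ℂ) (hS : condE S) :
    (IsUnit S → condE S⁻¹) ∧
    condE (swapMatrix m * S * swapMatrix m)ᵀ ∧
    (∀ Q : Matrix (Fin m) (Fin m) ℂ, IsUnit Q →
      condE ((Q ⊗ₖ Q) * S * (Q ⊗ₖ Q)⁻¹)) := by
  have hS' : pairE (kron12 S) (kron23 S) := hS
  refine ⟨?_, ?_, ?_⟩
  · -- inverse
    intro hU
    have hdet : IsUnit S.det := S.isUnit_iff_isUnit_det.mp hU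
    have h12 : kron12 S⁻¹ = (kron12 S)⁻¹ := by
      unfold kron12
      rw [Matrix.inv_reindex]
      congr 1
      rw [Matrix.inv_kronecker, inv_one]
    have h23 : kron23 S⁻¹ = (kron23 S)⁻¹ := by
      unfold kron23
      rw [Matrix.inv_kronecker, inv_one]
    have hu12 : IsUnit (kron12 S).det := by
      unfold kron12
      rw [Matrix.reindex_apply, Matrix.det_submatrix_equiv_self, Matrix.det_kronecker]
      exact ((hdet.pow _).mul (((isUnit_one : IsUnit (1 : Matrix (Fin m) (Fin m) ℂ)).map (Matrix.detMonoidHom)).pow _))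
    have hu23 : IsUnit (kron23 S).det := by
      unfold kron23
      rw [Matrix.det_kronecker]
      exact ((((isUnit_one : IsUnit (1 : Matrix (Fin m) (Fin m) ℂ)).map (Matrix.detMonoidHom)).pow _).mul (hdet.pow _))
    show pairE (kron12 S⁻¹) (kron23 S⁻¹)
    rw [h12, h23]
    exact pairE_inv hu12 hu23 hS'
  · -- (P S P)ᵀ
    show pairE (kron12 (swapMatrix m * S * swapMatrix m)ᵀ)
      (kron23 (swapMatrix m * S * swapMatrix m)ᵀ)
    rw [kron12_swapT, kron23_swapT]
    exact pairE_reindex (revE m) (pairE_transpose hS')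
  · -- conjugation by Q ⊗ Q
    intro Q hQ
    have hQd : IsUnit Q.det := Q.isUnit_iff_isUnit_det.mp hQ
    set C : Matrix (Fin m × Fin m) (Fin m × Fin m) ℂ := Q ⊗ₖ Q with hC
    set K : Matrix (Fin m × Fin m × Fin m) (Fin m × Fin m × Fin m) ℂ :=
      Q ⊗ₖ (Q ⊗ₖ Q) with hK
    have hCd : IsUnit C.det := by
      rw [hC, Matrix.det_kronecker]
      exact (hQd.pow _).mul (hQd.pow _)
    have hKd : IsUnit K.det := by
      rw [hK, Matrix.det_kronecker]
      exact (hQd.pow _).mul (hCd.pow _)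
    have hQQ : Q * Q⁻¹ = 1 := Matrix.mul_nonsing_inv _ hQd
    have h12 : kron12 (C * S * C⁻¹) = K * kron12 S * K⁻¹ := by
      have e1 : (C * S * C⁻¹) ⊗ₖ (1 : Matrix (Fin m) (Fin m) ℂ)
          = (C ⊗ₖ Q) * (S ⊗ₖ (1 : Matrix (Fin m) (Fin m) ℂ)) * (C⁻¹ ⊗ₖ Q⁻¹) := by
        rw [← Matrix.mul_kronecker_mul, ← Matrix.mul_kronecker_mul, mul_one, hQQ]
      have e2 : Matrix.reindex (Equiv.prodAssoc (Fin m) (Fin m) (Fin m))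
          (Equiv.prodAssoc (Fin m) (Fin m) (Fin m)) (C ⊗ₖ Q) = K := by
        rw [hC, hK, Matrix.kronecker_assoc]
      have e3 : Matrix.reindex (Equiv.prodAssoc (Fin m) (Fin m) (Fin m))
          (Equiv.prodAssoc (Fin m) (Fin m) (Fin m)) (C⁻¹ ⊗ₖ Q⁻¹) = K⁻¹ := by
        rw [← Matrix.inv_kronecker, ← Matrix.inv_reindex, e2]
      unfold kron12
      rw [e1]
      rw [← Matrix.reindexAlgEquiv_apply ℂ ℂ, _root_.map_mul, _root_.map_mul,
        Matrix.reindexAlgEquiv_apply, Matrix.reindexAlgEquiv_apply,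
        Matrix.reindexAlgEquiv_apply, e2, e3]
    have h23 : kron23 (C * S * C⁻¹) = K * kron23 S * K⁻¹ := by
      have e1 : (1 : Matrix (Fin m) (Fin m) ℂ) ⊗ₖ (C * S * C⁻¹)
          = (Q ⊗ₖ C) * ((1 : Matrix (Fin m) (Fin m) ℂ) ⊗ₖ S) * (Q⁻¹ ⊗ₖ C⁻¹) := by
        rw [← Matrix.mul_kronecker_mul, ← Matrix.mul_kronecker_mul, mul_one, hQQ]
      have e2 : Q⁻¹ ⊗ₖ C⁻¹ = K⁻¹ := by
        rw [← Matrix.inv_kronecker, hK, hC]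
      unfold kron23
      rw [e1, e2, hK, hC]
    show pairE (kron12 (C * S * C⁻¹)) (kron23 (C * S * C⁻¹))
    rw [h12, h23]
    exact pairE_conj hKd hS'
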